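/- Consider the system u̇ = −u(i + g₁(uv)), v̇ = v(i + g₂(uv)), ẇⱼ = wⱼ(λⱼ + gⱼ(uv)) for j = 3,…,n, where g₁, g₂, gⱼ are smooth functions of the single variable uv vanishing at 0. Then J(u,v,w) = w₃ ⋯ wₙ · uv · (g₂(uv) − g₁(uv)) is an inverse Jacobian multiplier of this system. -/

import Mathlib

/-- For the normal form system `u̇ = -u(i+g₁(uv))`, `v̇ = v(i+g₂(uv))`,
`ẇⱼ = wⱼ(λⱼ+gⱼ(uv))`, the function `J = w₃⋯wₙ · uv · (g₂(uv) - g₁(uv))` is an inverse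
Jacobian multiplier. Coordinates: `x 0 = u`, `x 1 = v`, `x i = wᵢ` for `i ≥ 2`. -/
private lemma fderiv_single_eq {n : ℕ} (f : (Fin n → ℂ) → ℂ) (x : Fin n → ℂ) (i : Fin n) (d : ℂ)
    (hf : DifferentiableAt ℂ f x)
    (hd : HasDerivAt (fun t => f (Function.update x i t)) d (x i)) :
    fderiv ℂ f x (Pi.single i 1) = d := by
  have hu : (fun t : ℂ => Function.update x i t)
      = fun t => x + (t - x i) • (Pi.single i 1 : Fin n → ℂ) := by
    funext t; funext j
    rcases eq_or_ne j i with rfl | h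
    · simp
    · simp [Function.update_of_ne h, Pi.single_eq_of_ne h]
  have hu' : HasDerivAt (fun t : ℂ => Function.update x i t)
      (Pi.single i 1 : Fin n → ℂ) (x i) := by
    rw [hu]
    have h1 : HasDerivAt (fun t : ℂ => x + (t - x i) • (Pi.single i 1 : Fin n → ℂ))
        ((1:ℂ) • (Pi.single i 1 : Fin n → ℂ)) (x i) :=
      ((((hasDerivAt_id (x i)).sub_const (x i)).smul_const (Pi.single i 1 : Fin n → ℂ))).const_add x
    simpa using h1
  have h3 : Function.update x i (x i) = x := Function.update_eq_self i x
  have hF : HasFDerivAt f (fderiv ℂ f x) (Function.update x i (x i)) := by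
    rw [h3]; exact hf.hasFDerivAt
  have h2 : HasDerivAt (fun t => f (Function.update x i t))
      (fderiv ℂ f x (Pi.single i 1)) (x i) := hF.comp_hasDerivAt (x i) hu'
  exact h2.unique hd

theorem stmt4 (m : ℕ) (lam : Fin (m + 2) → ℂ) (g₁ g₂ : ℂ → ℂ) (gj : Fin (m + 2) → ℂ → ℂ)
    (hg₁ : ContDiff ℂ ⊤ g₁) (hg₁0 : g₁ 0 = 0)
    (hg₂ : ContDiff ℂ ⊤ g₂) (hg₂0 : g₂ 0 = 0)
    (hgj : ∀ j, ContDiff ℂ ⊤ (gj j)) (hgj0 : ∀ j, gj j 0 = 0)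
    (F : (Fin (m + 2) → ℂ) → (Fin (m + 2) → ℂ))
    (hF : ∀ x i, F x i =
      if (i : ℕ) = 0 then -(x i) * (Complex.I + g₁ (x 0 * x 1))
      else if (i : ℕ) = 1 then x i * (Complex.I + g₂ (x 0 * x 1))
      else x i * (lam i + gj i (x 0 * x 1)))
    (J : (Fin (m + 2) → ℂ) → ℂ)
    (hJ : ∀ x, J x = (∏ i ∈ Finset.univ.filter (fun i : Fin (m + 2) => 2 ≤ (i : ℕ)), x i)
      * (x 0 * x 1) * (g₂ (x 0 * x 1) - g₁ (x 0 * x 1))) :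
    ∀ x, ∑ i, F x i * fderiv ℂ J x (Pi.single i 1)
      = J x * ∑ i, fderiv ℂ (fun y => F y i) x (Pi.single i 1) := by
  intro x
  classical
  set S : Finset (Fin (m + 2)) := Finset.univ.filter (fun i : Fin (m + 2) => 2 ≤ (i : ℕ)) with hS
  -- basic index facts
  have h10 : (1 : Fin (m + 2)) ≠ 0 := by
    refine Fin.ne_of_val_ne ?_; simp
  have h01 : (0 : Fin (m + 2)) ≠ 1 := h10.symm
  have h0S : (0 : Fin (m + 2)) ∉ S := by simp [hS]
  have h1S : (1 : Fin (m + 2)) ∉ S := by simp [hS]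
  have hiS0 : ∀ i ∈ S, i ≠ (0 : Fin (m + 2)) := by
    intro i hi h; subst h; exact h0S hi
  have hiS1 : ∀ i ∈ S, i ≠ (1 : Fin (m + 2)) := by
    intro i hi h; subst h; exact h1S hi
  -- function equalities
  have hJfun : J = fun y : Fin (m + 2) → ℂ => (∏ i ∈ S, y i) * (y 0 * y 1)
      * (g₂ (y 0 * y 1) - g₁ (y 0 * y 1)) := funext hJ
  have hFfun0 : (fun y : Fin (m + 2) → ℂ => F y 0)
      = fun y => -(y 0) * (Complex.I + g₁ (y 0 * y 1)) := by
    funext y; rw [hF]; simp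
  have hFfun1 : (fun y : Fin (m + 2) → ℂ => F y 1)
      = fun y => y 1 * (Complex.I + g₂ (y 0 * y 1)) := by
    funext y; rw [hF]; simp
  have hFfuni : ∀ i ∈ S, (fun y : Fin (m + 2) → ℂ => F y i)
      = fun y => y i * (lam i + gj i (y 0 * y 1)) := by
    intro i hi
    have h2i : 2 ≤ (i : ℕ) := by simpa [hS] using hi
    funext y; rw [hF]
    rw [if_neg (by omega), if_neg (by omega)]
  have hFx0 : F x 0 = -(x 0) * (Complex.I + g₁ (x 0 * x 1)) := congrFun hFfun0 x
  have hFx1 : F x 1 = x 1 * (Complex.I + g₂ (x 0 * x 1)) := congrFun hFfun1 x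
  have hFxi : ∀ i ∈ S, F x i = x i * (lam i + gj i (x 0 * x 1)) :=
    fun i hi => congrFun (hFfuni i hi) x
  -- differentiability infrastructure
  have hproj : ∀ j : Fin (m + 2), DifferentiableAt ℂ (fun y : Fin (m + 2) → ℂ => y j) x :=
    fun j => differentiableAt_pi.mp (differentiableAt_id) j
  have hsdiff : DifferentiableAt ℂ (fun y : Fin (m + 2) → ℂ => y 0 * y 1) x :=
    (hproj 0).mul (hproj 1)
  have hd₁ : ∀ y : ℂ, HasDerivAt g₁ (deriv g₁ y) y :=
    fun y => ((hg₁.differentiable (by simp)) y).hasDerivAt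
  have hd₂ : ∀ y : ℂ, HasDerivAt g₂ (deriv g₂ y) y :=
    fun y => ((hg₂.differentiable (by simp)) y).hasDerivAt
  have hJdiff : DifferentiableAt ℂ (fun y : Fin (m + 2) → ℂ => (∏ i ∈ S, y i) * (y 0 * y 1)
      * (g₂ (y 0 * y 1) - g₁ (y 0 * y 1))) x := by
    have hprod : DifferentiableAt ℂ (fun y : Fin (m + 2) → ℂ => ∏ i ∈ S, y i) x :=
      (HasFDerivAt.finset_prod (fun i (_ : i ∈ S) => hasFDerivAt_apply i x)).differentiableAt
    refine (hprod.mul hsdiff).mul ?_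
    exact (((hg₂.differentiable (by simp)) _).comp x hsdiff).sub
      (((hg₁.differentiable (by simp)) _).comp x hsdiff)
  -- 1-variable derivative building blocks
  have hmul0 : HasDerivAt (fun t : ℂ => t * x 1) (x 1) (x 0) := by
    simpa using (hasDerivAt_id (x 0)).mul_const (x 1)
  have hmul1 : HasDerivAt (fun t : ℂ => x 0 * t) (x 0) (x 1) := by
    simpa using (hasDerivAt_id (x 1)).const_mul (x 0)
  have hg1c : HasDerivAt (fun t : ℂ => g₁ (t * x 1)) (deriv g₁ (x 0 * x 1) * x 1) (x 0) :=
    (hd₁ (x 0 * x 1)).comp (x 0) hmul0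
  have hg2c : HasDerivAt (fun t : ℂ => g₂ (t * x 1)) (deriv g₂ (x 0 * x 1) * x 1) (x 0) :=
    (hd₂ (x 0 * x 1)).comp (x 0) hmul0
  have hg1c' : HasDerivAt (fun t : ℂ => g₁ (x 0 * t)) (deriv g₁ (x 0 * x 1) * x 0) (x 1) :=
    (hd₁ (x 0 * x 1)).comp (x 1) hmul1
  have hg2c' : HasDerivAt (fun t : ℂ => g₂ (x 0 * t)) (deriv g₂ (x 0 * x 1) * x 0) (x 1) :=
    (hd₂ (x 0 * x 1)).comp (x 1) hmul1
  -- partial derivatives of J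
  have A0 : fderiv ℂ (fun y : Fin (m + 2) → ℂ => (∏ i ∈ S, y i) * (y 0 * y 1)
        * (g₂ (y 0 * y 1) - g₁ (y 0 * y 1))) x (Pi.single 0 1)
      = (∏ i ∈ S, x i) * x 1 * (g₂ (x 0 * x 1) - g₁ (x 0 * x 1))
        + (∏ i ∈ S, x i) * (x 0 * x 1)
          * (deriv g₂ (x 0 * x 1) * x 1 - deriv g₁ (x 0 * x 1) * x 1) := by
    apply fderiv_single_eq _ _ _ _ hJdiff
    simp only [Finset.prod_update_of_notMem h0S, Function.update_self,
      Function.update_of_ne h10]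
    exact (hmul0.const_mul _).mul (hg2c.sub hg1c)
  have A1 : fderiv ℂ (fun y : Fin (m + 2) → ℂ => (∏ i ∈ S, y i) * (y 0 * y 1)
        * (g₂ (y 0 * y 1) - g₁ (y 0 * y 1))) x (Pi.single 1 1)
      = (∏ i ∈ S, x i) * x 0 * (g₂ (x 0 * x 1) - g₁ (x 0 * x 1))
        + (∏ i ∈ S, x i) * (x 0 * x 1)
          * (deriv g₂ (x 0 * x 1) * x 0 - deriv g₁ (x 0 * x 1) * x 0) := by
    apply fderiv_single_eq _ _ _ _ hJdiff
    simp only [Finset.prod_update_of_notMem h1S, Function.update_self,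
      Function.update_of_ne h01]
    exact (hmul1.const_mul _).mul (hg2c'.sub hg1c')
  have Ai : ∀ i ∈ S, fderiv ℂ (fun y : Fin (m + 2) → ℂ => (∏ i ∈ S, y i) * (y 0 * y 1)
        * (g₂ (y 0 * y 1) - g₁ (y 0 * y 1))) x (Pi.single i 1)
      = 1 * (∏ j ∈ S.erase i, x j) * (x 0 * x 1) * (g₂ (x 0 * x 1) - g₁ (x 0 * x 1)) := by
    intro i hi
    apply fderiv_single_eq (fun y : Fin (m + 2) → ℂ => (∏ i ∈ S, y i) * (y 0 * y 1)
        * (g₂ (y 0 * y 1) - g₁ (y 0 * y 1))) x i _ hJdiff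
    have hfun : (fun t : ℂ => (∏ j ∈ S, Function.update x i t j)
          * (Function.update x i t 0 * Function.update x i t 1)
          * (g₂ (Function.update x i t 0 * Function.update x i t 1)
            - g₁ (Function.update x i t 0 * Function.update x i t 1)))
        = fun t : ℂ => t * (∏ j ∈ S.erase i, x j) * (x 0 * x 1)
            * (g₂ (x 0 * x 1) - g₁ (x 0 * x 1)) := by
      funext t
      rw [Function.update_of_ne (Ne.symm (hiS0 i hi)), Function.update_of_ne (Ne.symm (hiS1 i hi)),
        Finset.prod_update_of_mem hi, ← Finset.erase_eq]
    show HasDerivAt (fun t : ℂ => (∏ j ∈ S, Function.update x i t j)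
        * (Function.update x i t 0 * Function.update x i t 1)
        * (g₂ (Function.update x i t 0 * Function.update x i t 1)
          - g₁ (Function.update x i t 0 * Function.update x i t 1))) _ (x i)
    rw [hfun]
    exact (((hasDerivAt_id (x i)).mul_const _).mul_const _).mul_const _
  -- partial derivatives of F components
  have B0 : fderiv ℂ (fun y : Fin (m + 2) → ℂ => -(y 0) * (Complex.I + g₁ (y 0 * y 1))) x
        (Pi.single 0 1)
      = (-1) * (Complex.I + g₁ (x 0 * x 1)) + -(x 0) * (deriv g₁ (x 0 * x 1) * x 1) := by
    apply fderiv_single_eq (fun y : Fin (m + 2) → ℂ => -(y 0) * (Complex.I + g₁ (y 0 * y 1)))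
      x 0 _
      (((hproj 0).neg).mul
        (((((hg₁.differentiable (by simp)) _).comp x hsdiff)).const_add Complex.I))
    show HasDerivAt (fun t : ℂ => -(Function.update x 0 t 0)
        * (Complex.I + g₁ (Function.update x 0 t 0 * Function.update x 0 t 1))) _ (x 0)
    simp only [Function.update_self, Function.update_of_ne h10]
    exact ((hasDerivAt_id (x 0)).neg).mul (hg1c.const_add Complex.I)
  have B1 : fderiv ℂ (fun y : Fin (m + 2) → ℂ => y 1 * (Complex.I + g₂ (y 0 * y 1))) x
        (Pi.single 1 1)
      = 1 * (Complex.I + g₂ (x 0 * x 1)) + x 1 * (deriv g₂ (x 0 * x 1) * x 0) := by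
    apply fderiv_single_eq (fun y : Fin (m + 2) → ℂ => y 1 * (Complex.I + g₂ (y 0 * y 1)))
      x 1 _
      ((hproj 1).mul
        (((((hg₂.differentiable (by simp)) _).comp x hsdiff)).const_add Complex.I))
    show HasDerivAt (fun t : ℂ => (Function.update x 1 t 1)
        * (Complex.I + g₂ (Function.update x 1 t 0 * Function.update x 1 t 1))) _ (x 1)
    simp only [Function.update_self, Function.update_of_ne h01]
    exact (hasDerivAt_id (x 1)).mul (hg2c'.const_add Complex.I)
  have Bi : ∀ i ∈ S, fderiv ℂ (fun y : Fin (m + 2) → ℂ => y i * (lam i + gj i (y 0 * y 1))) x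
        (Pi.single i 1)
      = 1 * (lam i + gj i (x 0 * x 1)) := by
    intro i hi
    apply fderiv_single_eq (fun y : Fin (m + 2) → ℂ => y i * (lam i + gj i (y 0 * y 1)))
      x i _
      ((hproj i).mul
        ((((((hgj i).differentiable (by simp)) _).comp x hsdiff)).const_add (lam i)))
    show HasDerivAt (fun t : ℂ => (Function.update x i t i)
        * (lam i + gj i (Function.update x i t 0 * Function.update x i t 1))) _ (x i)
    simp only [Function.update_self, Function.update_of_ne (Ne.symm (hiS0 i hi)),
      Function.update_of_ne (Ne.symm (hiS1 i hi))]
    exact (hasDerivAt_id (x i)).mul_const _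
  -- sum splitting
  have hsplit : ∀ f : Fin (m + 2) → ℂ, ∑ i, f i = f 0 + f 1 + ∑ i ∈ S, f i := by
    intro f
    have h := Finset.sum_filter_add_sum_filter_not Finset.univ
      (fun i : Fin (m + 2) => 2 ≤ (i : ℕ)) f
    have h2 : Finset.univ.filter (fun i : Fin (m + 2) => ¬ 2 ≤ (i : ℕ))
        = ({0, 1} : Finset (Fin (m + 2))) := by
      ext i
      simp only [Finset.mem_filter, Finset.mem_univ, true_and, Finset.mem_insert,
        Finset.mem_singleton, not_le]
      constructor
      · intro hi
        have hv : (i : ℕ) = 0 ∨ (i : ℕ) = 1 := by omega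
        rcases hv with hv | hv
        · left; exact Fin.ext (by simp [hv])
        · right; exact Fin.ext (by simp [hv])
      · rintro (rfl | rfl) <;> simp
    rw [h2, Finset.sum_pair h01] at h
    rw [← hS] at h
    rw [← h]; ring
  -- sums over S
  have hSL : ∑ i ∈ S, F x i * fderiv ℂ (fun y : Fin (m + 2) → ℂ => (∏ i ∈ S, y i) * (y 0 * y 1)
        * (g₂ (y 0 * y 1) - g₁ (y 0 * y 1))) x (Pi.single i 1)
      = (∑ i ∈ S, (lam i + gj i (x 0 * x 1)))
        * ((∏ i ∈ S, x i) * ((x 0 * x 1) * (g₂ (x 0 * x 1) - g₁ (x 0 * x 1)))) := by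
    rw [Finset.sum_mul]
    refine Finset.sum_congr rfl fun i hi => ?_
    rw [hFxi i hi, Ai i hi, ← Finset.mul_prod_erase S x hi]
    ring
  have hSR : ∑ i ∈ S, fderiv ℂ (fun y => F y i) x (Pi.single i 1)
      = ∑ i ∈ S, (lam i + gj i (x 0 * x 1)) := by
    refine Finset.sum_congr rfl fun i hi => ?_
    rw [hFfuni i hi, Bi i hi, one_mul]
  simp only [hJfun]
  rw [hsplit, hsplit, hFx0, hFx1, A0, A1, hFfun0, hFfun1, B0, B1, hSL, hSR]
  ring
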